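/- arXiv:1109.0489 — 2 statements merged into one kernel-verified Lean document; each statement's English description precedes it below -/
import Mathlib

section
/- Let T be an N×N real orthogonal matrix, let σ_1 ≥ σ_2 ≥ ... ≥ σ_N ≥ 0, and define η_i = Σ_{j=1}^N T_{ij}² σ_j. Let X̃ = (X̃_1, ..., X̃_N) be a vector of independent centered Gaussian random variables with variances E[X̃_i²] = η_i, and let Y = (Y_1, ..., Y_N) be a vector of independent centered Gaussian random variables with variances E[Y_i²] = σ_i. Then for every convex, permutation-symmetric function φ : R^N → R, E[ φ(X̃_1², ..., X̃_N²) ] ≤ E[ φ(Y_1², ..., Y_N²) ]. -/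
open MeasureTheory ProbabilityTheory
open scoped NNReal ENNReal

/-- Joint distribution of independent random variables is the product measure. -/
lemma mp_map_joint {Ω : Type*} [MeasureSpace Ω] [IsProbabilityMeasure (ℙ : Measure Ω)]
    {N : ℕ} (f : Fin N → Ω → ℝ) (hmeas : ∀ i, Measurable (f i))
    (hindep : iIndepFun f ℙ) :
    Measure.map (fun ω i => f i ω) ℙ = Measure.pi (fun i => Measure.map (f i) ℙ) := by
  have hpm : ∀ i, IsProbabilityMeasure (Measure.map (f i) ℙ) :=
    fun i => Measure.isProbabilityMeasure_map (hmeas i).aemeasurable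
  refine (Measure.pi_eq fun s hs => ?_).symm
  rw [Measure.map_apply (measurable_pi_iff.2 fun i => hmeas i) (MeasurableSet.univ_pi hs)]
  have hpre : (fun ω i => f i ω) ⁻¹' (Set.univ.pi s) = ⋂ i ∈ Finset.univ, f i ⁻¹' s i := by
    ext ω; simp [Set.mem_univ_pi]
  rw [hpre, hindep.measure_inter_preimage_eq_mul Finset.univ (fun i _ => hs i)]
  exact Finset.prod_congr rfl fun i _ => (Measure.map_apply (hmeas i) (hs i)).symm

/-- Permuting coordinates preserves a product of identical measures. -/
lemma mp_perm {N : ℕ} (μ : Measure ℝ) [IsProbabilityMeasure μ] (π : Equiv.Perm (Fin N)) :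
    MeasurePreserving (fun x : Fin N → ℝ => fun i => x (π i))
      (Measure.pi fun _ : Fin N => μ) (Measure.pi fun _ : Fin N => μ) := by
  constructor
  · exact measurable_pi_iff.2 fun i => measurable_pi_apply _
  refine (Measure.pi_eq fun s hs => ?_).symm
  have hm : Measurable (fun x : Fin N → ℝ => fun i => x (π i)) :=
    measurable_pi_iff.2 fun i => measurable_pi_apply _
  rw [Measure.map_apply hm (MeasurableSet.univ_pi hs)]
  have hpre : (fun x : Fin N → ℝ => fun i => x (π i)) ⁻¹' (Set.univ.pi s)
      = Set.univ.pi (fun j => s (π.symm j)) := by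
    ext x
    simp only [Set.mem_preimage, Set.mem_univ_pi]
    constructor
    · intro h j; simpa using h (π.symm j)
    · intro h i; simpa using h (π i)
  rw [hpre, Measure.pi_pi]
  exact Equiv.prod_comp π.symm fun j => μ (s j)

/-- Scaling a standard gaussian by `√v` gives a gaussian with variance `v`. -/
lemma mp_gauss_scale (v : ℝ≥0) :
    MeasurePreserving (fun x : ℝ => Real.sqrt v * x) (gaussianReal 0 1) (gaussianReal 0 v) := by
  constructor
  · exact measurable_id.const_mul _
  have h := gaussianReal_map_const_mul (μ := 0) (v := 1) (Real.sqrt v)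
  have h2 : (⟨(Real.sqrt v) ^ 2, sq_nonneg _⟩ : ℝ≥0) * 1 = v := by
    ext; simp [Real.sq_sqrt v.coe_nonneg]
  rw [mul_zero] at h
  convert h using 2
  ext; simp [Real.sq_sqrt v.coe_nonneg]

/-- Transfer the expectation of `φ` of squares of independent centered gaussians to an
integral against a product of standard gaussians, with the variances as coefficients. -/
lemma mp_transfer {Ω : Type*} [MeasureSpace Ω] [IsProbabilityMeasure (ℙ : Measure Ω)]
    {N : ℕ} (τ : Fin N → ℝ≥0) (Z : Fin N → Ω → ℝ) (hmeas : ∀ i, Measurable (Z i))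
    (hindep : iIndepFun Z ℙ)
    (hgauss : ∀ i, Measure.map (Z i) ℙ = gaussianReal 0 (τ i))
    (φ : (Fin N → ℝ) → ℝ) (hφcont : Continuous φ) :
    (∫ ω, φ (fun i => (Z i ω) ^ 2) ∂ℙ
      = ∫ x, φ (fun i => (τ i : ℝ) * x i ^ 2) ∂(Measure.pi fun _ : Fin N => gaussianReal 0 1))
    ∧ (Integrable (fun ω => φ (fun i => (Z i ω) ^ 2)) ℙ ↔
        Integrable (fun x => φ (fun i => (τ i : ℝ) * x i ^ 2))
          (Measure.pi fun _ : Fin N => gaussianReal 0 1)) := by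
  set G : Measure (Fin N → ℝ) := Measure.pi fun _ : Fin N => gaussianReal 0 1 with hGdef
  have h1 : Measure.map (fun ω i => Z i ω) ℙ = Measure.pi (fun i => gaussianReal 0 (τ i)) := by
    rw [mp_map_joint Z hmeas hindep]
    exact congrArg Measure.pi (funext hgauss)
  have hscale : MeasurePreserving (fun a : Fin N → ℝ => fun i => Real.sqrt (τ i) * a i)
      G (Measure.pi fun i => gaussianReal 0 (τ i)) :=
    measurePreserving_pi _ _ (fun i => mp_gauss_scale (τ i))
  have hF : Continuous (fun x : Fin N → ℝ => φ (fun i => x i ^ 2)) :=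
    hφcont.comp (continuous_pi fun i => (continuous_apply i).pow 2)
  have hjm : Measurable (fun ω i => Z i ω) := measurable_pi_iff.2 hmeas
  have hsq : (fun a : Fin N → ℝ => φ (fun i => (Real.sqrt (τ i) * a i) ^ 2))
      = fun a => φ (fun i => (τ i : ℝ) * a i ^ 2) := by
    funext a
    congr 1
    funext i
    rw [mul_pow, Real.sq_sqrt (τ i).coe_nonneg]
  constructor
  · have e1 : ∫ ω, φ (fun i => (Z i ω) ^ 2) ∂ℙ
        = ∫ x, φ (fun i => x i ^ 2) ∂(Measure.map (fun ω i => Z i ω) ℙ) :=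
      (integral_map hjm.aemeasurable hF.aestronglyMeasurable).symm
    rw [e1, h1, ← hscale.map_eq,
      integral_map hscale.measurable.aemeasurable hF.aestronglyMeasurable]
    exact congrArg (fun g => ∫ a, g a ∂G) hsq
  · have e2 : Integrable (fun x : Fin N → ℝ => φ (fun i => x i ^ 2))
        (Measure.map (fun ω i => Z i ω) ℙ) ↔ Integrable (fun ω => φ (fun i => (Z i ω) ^ 2)) ℙ :=
      integrable_map_measure hF.aestronglyMeasurable hjm.aemeasurable
    rw [← e2, h1, ← hscale.map_eq,
      integrable_map_measure hF.aestronglyMeasurable hscale.measurable.aemeasurable]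
    have : ((fun x : Fin N → ℝ => φ fun i => x i ^ 2)
        ∘ fun a : Fin N → ℝ => fun i => Real.sqrt (τ i) * a i)
        = fun a => φ (fun i => (τ i : ℝ) * a i ^ 2) := hsq
    rw [this]

/-- Permutation invariance of the gaussian integral of a symmetric function. -/
lemma mp_perm_int {N : ℕ} (σ : Fin N → ℝ≥0) (φ : (Fin N → ℝ) → ℝ) (hφcont : Continuous φ)
    (hφsymm : ∀ (e : Equiv.Perm (Fin N)) (x : Fin N → ℝ), φ (x ∘ e) = φ x)
    (π : Equiv.Perm (Fin N)) :
    (∫ x, φ (fun i => (σ (π i) : ℝ) * x i ^ 2) ∂(Measure.pi fun _ : Fin N => gaussianReal 0 1)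
      = ∫ x, φ (fun i => (σ i : ℝ) * x i ^ 2) ∂(Measure.pi fun _ : Fin N => gaussianReal 0 1))
    ∧ (Integrable (fun x : Fin N → ℝ => φ (fun i => (σ (π i) : ℝ) * x i ^ 2))
          (Measure.pi fun _ : Fin N => gaussianReal 0 1) ↔
        Integrable (fun x : Fin N → ℝ => φ (fun i => (σ i : ℝ) * x i ^ 2))
          (Measure.pi fun _ : Fin N => gaussianReal 0 1)) := by
  set G : Measure (Fin N → ℝ) := Measure.pi fun _ : Fin N => gaussianReal 0 1 with hGdef
  have hT := mp_perm (gaussianReal 0 1) π⁻¹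
  have hf : Continuous (fun y : Fin N → ℝ => φ (fun j => (σ j : ℝ) * y j ^ 2)) :=
    hφcont.comp (continuous_pi fun j => continuous_const.mul ((continuous_apply j).pow 2))
  have hkey : (fun x : Fin N → ℝ => φ (fun i => (σ (π i) : ℝ) * x i ^ 2))
      = (fun y : Fin N → ℝ => φ (fun j => (σ j : ℝ) * y j ^ 2))
        ∘ (fun x : Fin N → ℝ => fun j => x (π⁻¹ j)) := by
    funext x
    have h1 : (fun j => (σ j : ℝ) * (x (π⁻¹ j)) ^ 2) ∘ π
        = fun i => (σ (π i) : ℝ) * x i ^ 2 := by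
      funext i
      simp [Function.comp]
    simp only [Function.comp]
    rw [← hφsymm π (fun j => (σ j : ℝ) * (x (π⁻¹ j)) ^ 2), h1]
  constructor
  · have := integral_map (μ := G) hT.measurable.aemeasurable
      (f := fun y : Fin N → ℝ => φ (fun j => (σ j : ℝ) * y j ^ 2)) hf.aestronglyMeasurable
    rw [hT.map_eq] at this
    rw [hkey]
    exact this.symm
  · have := integrable_map_measure (μ := G)
      (g := fun y : Fin N → ℝ => φ (fun j => (σ j : ℝ) * y j ^ 2))
      (f := fun x : Fin N → ℝ => fun j => x (π⁻¹ j)) hf.aestronglyMeasurable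
      hT.measurable.aemeasurable
    rw [hT.map_eq] at this
    rw [hkey]
    exact this.symm

/-- **Marshall–Proschan comparison.** Let `T` be an `N × N` real
orthogonal matrix, `σ_1 ≥ σ_2 ≥ … ≥ σ_N ≥ 0`, and `η_i = ∑ j, T_{ij}² σ_j`.
Let `X̃` be independent centered Gaussians with variances `η_i` and `Y`
independent centered Gaussians with variances `σ_i`. Then for every convex,
permutation-symmetric `φ : ℝ^N → ℝ`,
`E[φ(X̃_1², …, X̃_N²)] ≤ E[φ(Y_1², …, Y_N²)]`. -/
theorem marshall_proschan_gaussian {Ω : Type*} [MeasureSpace Ω]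
    [IsProbabilityMeasure (ℙ : Measure Ω)]
    (N : ℕ) (T : Matrix (Fin N) (Fin N) ℝ) (hT : T.transpose * T = 1)
    (σ : Fin N → ℝ≥0) (hσ : Antitone σ)
    (η : Fin N → ℝ≥0) (hη : ∀ i, (η i : ℝ) = ∑ j, T i j ^ 2 * (σ j : ℝ))
    (Xt : Fin N → Ω → ℝ) (hXtmeas : ∀ i, Measurable (Xt i))
    (hXtindep : iIndepFun Xt ℙ)
    (hXtgauss : ∀ i, Measure.map (Xt i) ℙ = gaussianReal 0 (η i))
    (Y : Fin N → Ω → ℝ) (hYmeas : ∀ i, Measurable (Y i))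
    (hYindep : iIndepFun Y ℙ)
    (hYgauss : ∀ i, Measure.map (Y i) ℙ = gaussianReal 0 (σ i))
    (φ : (Fin N → ℝ) → ℝ) (hφconv : ConvexOn ℝ Set.univ φ)
    (hφsymm : ∀ (e : Equiv.Perm (Fin N)) (x : Fin N → ℝ), φ (x ∘ e) = φ x)
    (hXtint : Integrable (fun ω => φ (fun i => (Xt i ω) ^ 2)) ℙ)
    (hYint : Integrable (fun ω => φ (fun i => (Y i ω) ^ 2)) ℙ) :
    ∫ ω, φ (fun i => (Xt i ω) ^ 2) ∂ℙ ≤ ∫ ω, φ (fun i => (Y i ω) ^ 2) ∂ℙ := by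
  classical
  have hφcont : Continuous φ := by
    exact continuousOn_univ.mp (hφconv.continuousOn isOpen_univ)
  obtain ⟨hXeq, hXiff⟩ := mp_transfer η Xt hXtmeas hXtindep hXtgauss φ hφcont
  obtain ⟨hYeq, hYiff⟩ := mp_transfer σ Y hYmeas hYindep hYgauss φ hφcont
  set G : Measure (Fin N → ℝ) := Measure.pi fun _ : Fin N => gaussianReal 0 1 with hGdef
  -- Birkhoff decomposition of the doubly stochastic matrix of squared entries of `T`
  have hTT : T * T.transpose = 1 := mul_eq_one_comm.mp hT
  have hM : (Matrix.of fun i j => T i j ^ 2) ∈ doublyStochastic ℝ (Fin N) := by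
    rw [mem_doublyStochastic_iff_sum]
    refine ⟨fun i j => sq_nonneg _, fun i => ?_, fun j => ?_⟩
    · have h1 : (T * T.transpose) i i = (1 : Matrix (Fin N) (Fin N) ℝ) i i := by rw [hTT]
      simpa [Matrix.mul_apply, Matrix.one_apply, sq] using h1
    · have h1 : (T.transpose * T) j j = (1 : Matrix (Fin N) (Fin N) ℝ) j j := by rw [hT]
      simpa [Matrix.mul_apply, Matrix.one_apply, sq] using h1
  obtain ⟨w, hw0, hw1, hwM⟩ := exists_eq_sum_perm_of_mem_doublyStochastic hM
  have hperm_entry : ∀ (π : Equiv.Perm (Fin N)) (i j : Fin N),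
      (π.permMatrix ℝ) i j = if π i = j then 1 else 0 := by
    intro π i j
    simp [Equiv.Perm.permMatrix, PEquiv.toMatrix_apply, Equiv.toPEquiv_apply, eq_comm]
  have hηw : ∀ i, (η i : ℝ) = ∑ π : Equiv.Perm (Fin N), w π * (σ (π i) : ℝ) := by
    intro i
    rw [hη i]
    have hwMij : ∀ j, T i j ^ 2 = ∑ π : Equiv.Perm (Fin N), w π * ((π.permMatrix ℝ) i j) := by
      intro j
      have h2 := congrArg (fun M : Matrix (Fin N) (Fin N) ℝ => M i j) hwM
      simpa [Matrix.sum_apply] using h2.symm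
    calc ∑ j, T i j ^ 2 * (σ j : ℝ)
        = ∑ j, ∑ π : Equiv.Perm (Fin N), w π * ((π.permMatrix ℝ) i j) * (σ j : ℝ) := by
          refine Finset.sum_congr rfl fun j _ => ?_
          rw [hwMij j, Finset.sum_mul]
      _ = ∑ π : Equiv.Perm (Fin N), ∑ j, w π * ((π.permMatrix ℝ) i j) * (σ j : ℝ) :=
          Finset.sum_comm
      _ = ∑ π : Equiv.Perm (Fin N), w π * (σ (π i) : ℝ) := by
          refine Finset.sum_congr rfl fun π _ => ?_
          simp [hperm_entry, Equiv.toPEquiv_apply, mul_ite, ite_mul, Finset.sum_ite_eq]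
  -- pointwise Jensen
  have hpoint : ∀ x : Fin N → ℝ, φ (fun i => (η i : ℝ) * x i ^ 2)
      ≤ ∑ π : Equiv.Perm (Fin N), w π * φ (fun i => (σ (π i) : ℝ) * x i ^ 2) := by
    intro x
    have h := hφconv.map_sum_le (t := Finset.univ) (w := w)
      (p := fun π : Equiv.Perm (Fin N) => fun i => (σ (π i) : ℝ) * x i ^ 2)
      (fun π _ => hw0 π) hw1 (fun π _ => Set.mem_univ _)
    have harg : (fun i => (η i : ℝ) * x i ^ 2)
        = ∑ π : Equiv.Perm (Fin N), w π • fun i => (σ (π i) : ℝ) * x i ^ 2 := by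
      funext i
      rw [Finset.sum_apply, hηw i, Finset.sum_mul]
      refine Finset.sum_congr rfl fun π _ => ?_
      simp [mul_assoc]
    rw [harg]
    simpa [smul_eq_mul] using h
  -- integrability on the gaussian side
  rw [hXeq, hYeq]
  have hIntσ : Integrable (fun x : Fin N → ℝ => φ (fun i => (σ i : ℝ) * x i ^ 2)) G :=
    hYiff.mp hYint
  have hIntπ : ∀ π : Equiv.Perm (Fin N),
      Integrable (fun x : Fin N → ℝ => φ (fun i => (σ (π i) : ℝ) * x i ^ 2)) G :=
    fun π => ((mp_perm_int σ φ hφcont hφsymm π).2).mpr hIntσ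
  have hIntη : Integrable (fun x : Fin N → ℝ => φ (fun i => (η i : ℝ) * x i ^ 2)) G :=
    hXiff.mp hXtint
  have hIntSum : Integrable (fun x : Fin N → ℝ =>
      ∑ π : Equiv.Perm (Fin N), w π * φ (fun i => (σ (π i) : ℝ) * x i ^ 2)) G :=
    integrable_finset_sum _ (fun π _ => (hIntπ π).const_mul (w π))
  calc ∫ x, φ (fun i => (η i : ℝ) * x i ^ 2) ∂G
      ≤ ∫ x, ∑ π : Equiv.Perm (Fin N), w π * φ (fun i => (σ (π i) : ℝ) * x i ^ 2) ∂G :=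
        integral_mono hIntη hIntSum hpoint
    _ = ∑ π : Equiv.Perm (Fin N), w π * ∫ x, φ (fun i => (σ (π i) : ℝ) * x i ^ 2) ∂G := by
        rw [integral_finset_sum _ (fun π _ => (hIntπ π).const_mul (w π))]
        exact Finset.sum_congr rfl fun π _ => integral_const_mul _ _
    _ = ∑ π : Equiv.Perm (Fin N), w π * ∫ x, φ (fun i => (σ i : ℝ) * x i ^ 2) ∂G :=
        Finset.sum_congr rfl fun π _ => by rw [(mp_perm_int σ φ hφcont hφsymm π).1]
    _ = ∫ x, φ (fun i => (σ i : ℝ) * x i ^ 2) ∂G := by rw [← Finset.sum_mul, hw1, one_mul]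
end

section
/- Let T be an N×N real orthogonal matrix, let σ_1 ≥ σ_2 ≥ ... ≥ σ_N ≥ 0, and define η_i = Σ_{j=1}^N T_{ij}² σ_j. Let X̃ = (X̃_1, ..., X̃_N) be a vector of independent centered Gaussian random variables with variances E[X̃_i²] = η_i, and let Y = (Y_1, ..., Y_N) be a vector of independent centered Gaussian random variables with variances E[Y_i²] = σ_i. Then for every M with 1 ≤ M ≤ N, E[ φ_M(X̃) ] ≤ E[ φ_M(Y) ], where φ_M(x) = max over choices of M distinct indices i_1, ..., i_M of Σ_{j=1}^M x_{i_j}². -/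
open MeasureTheory ProbabilityTheory
open scoped NNReal ENNReal


lemma my_iSup_equiv {ι ι' : Type*} (e : ι ≃ ι') (g : ι' → ℝ) :
    ⨆ x, g (e x) = ⨆ y, g y := by
  rw [iSup, iSup]
  congr 1
  exact e.surjective.range_comp g

lemma my_measurable_sup' {ι Ω : Type*} [MeasurableSpace Ω] (s : Finset ι) (hs : s.Nonempty)
    (f : ι → Ω → ℝ) (hf : ∀ i, Measurable (f i)) :
    Measurable (fun ω => s.sup' hs (fun i => f i ω)) := by
  induction hs using Finset.Nonempty.cons_induction with
  | singleton a => simpa using hf a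
  | cons a s ha hs ih =>
      simp only [Finset.sup'_cons hs]
      exact (hf a).sup ih

lemma my_measurable_iSup {ι Ω : Type*} [MeasurableSpace Ω] [Fintype ι] [Nonempty ι]
    (f : ι → Ω → ℝ) (hf : ∀ i, Measurable (f i)) :
    Measurable (fun ω => ⨆ i, f i ω) := by
  have : (fun ω => ⨆ i, f i ω)
      = fun ω => Finset.univ.sup' Finset.univ_nonempty (fun i => f i ω) := by
    funext ω; rw [Finset.sup'_univ_eq_ciSup]
  rw [this]
  exact my_measurable_sup' _ _ f hf

lemma my_integrable_gauss_sq : Integrable (fun x : ℝ => x ^ 2) (gaussianReal 0 1) := by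
  rw [gaussianReal_of_var_ne_zero 0 one_ne_zero,
    integrable_withDensity_iff (measurable_gaussianPDF 0 1)
      (Filter.Eventually.of_forall fun x => ENNReal.ofReal_lt_top)]
  have h := (integrable_rpow_mul_exp_neg_mul_sq (b := 1/2) (by norm_num)
      (s := 2) (by norm_num)).const_mul (Real.sqrt (2 * Real.pi))⁻¹
  refine h.congr (Filter.Eventually.of_forall fun x => ?_)
  simp only [gaussianPDF_def, gaussianPDFReal_def]
  rw [ENNReal.toReal_ofReal (by positivity)]
  rw [show ((2:ℝ)) = ((2:ℕ):ℝ) from by norm_num, Real.rpow_natCast] at *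
  push_cast
  simp only [mul_one, sub_zero]
  rw [show -x ^ 2 / 2 = -(1/2) * x ^ 2 from by ring]
  ring

noncomputable def Pim (N : ℕ) : Measure (Fin N → ℝ) := Measure.pi fun _ => gaussianReal 0 1

instance (N : ℕ) : IsProbabilityMeasure (Pim N) := by unfold Pim; infer_instance

lemma map_eval_Pim (N : ℕ) (i : Fin N) :
    (Pim N).map (fun z => z i) = gaussianReal 0 1 := by
  ext s hs
  rw [Measure.map_apply (measurable_pi_apply i) hs]
  have h1 : (fun z : Fin N → ℝ => z i) ⁻¹' s
      = Set.pi Set.univ (Function.update (fun _ => Set.univ) i s) := by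
    exact Set.eval_preimage
  rw [Pim, h1, Measure.pi_pi]
  rw [Fintype.prod_eq_single i (fun j hj => by simp [Function.update_of_ne hj])]
  simp

lemma my_int_sq (N : ℕ) (i : Fin N) :
    Integrable (fun z : Fin N → ℝ => z i ^ 2) (Pim N) := by
  have h := my_integrable_gauss_sq
  rw [← map_eval_Pim N i] at h
  exact (integrable_map_measure ((measurable_id.pow_const 2).aestronglyMeasurable)
    (measurable_pi_apply i).aemeasurable).mp h

lemma my_mp_perm (N : ℕ) (e : Equiv.Perm (Fin N)) :
    MeasurePreserving (fun z : Fin N → ℝ => fun i => z (e i)) (Pim N) (Pim N) := by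
  constructor
  · exact measurable_pi_lambda _ fun i => measurable_pi_apply _
  · refine (Measure.pi_eq fun s hs => ?_).symm
    rw [Measure.map_apply (measurable_pi_lambda (fun z : Fin N → ℝ => fun i => z (e i))
      (fun i => measurable_pi_apply _)) (MeasurableSet.univ_pi hs)]
    have h1 : (fun z : Fin N → ℝ => fun i => z (e i)) ⁻¹' Set.pi Set.univ s
        = Set.pi Set.univ (fun j => s (e.symm j)) := by
      ext z
      simp only [Set.mem_preimage, Set.mem_pi, Set.mem_univ, true_implies]
      constructor
      · intro h j; simpa using h (e.symm j)
      · intro h i; simpa using h (e i)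
    rw [Pim, h1, Measure.pi_pi]
    exact Equiv.prod_comp e.symm fun j => (gaussianReal 0 1 : Measure ℝ) (s j)
noncomputable def Phi (N M : ℕ) (v z : Fin N → ℝ) : ℝ :=
  ⨆ s : {s : Finset (Fin N) // s.card = M}, ∑ i ∈ s.1, v i * z i ^ 2

lemma SM_nonempty {N M : ℕ} (h : M ≤ N) :
    Nonempty {s : Finset (Fin N) // s.card = M} := by
  obtain ⟨t, -, ht⟩ := Finset.exists_subset_card_eq (s := (Finset.univ : Finset (Fin N))) (n := M)
    (by simpa using h)
  exact ⟨⟨t, ht⟩⟩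

lemma measurable_Phi {N M : ℕ} (hne : Nonempty {s : Finset (Fin N) // s.card = M})
    (v : Fin N → ℝ) : Measurable (Phi N M v) := by
  exact my_measurable_iSup _ fun s => Finset.measurable_sum _
    fun i _ => by fun_prop

lemma term_le_Phi {N M : ℕ} (v z : Fin N → ℝ) (s : {s : Finset (Fin N) // s.card = M}) :
    ∑ i ∈ s.1, v i * z i ^ 2 ≤ Phi N M v z := by
  unfold Phi
  exact le_ciSup (f := fun s : {s : Finset (Fin N) // s.card = M} =>
    ∑ i ∈ s.1, v i * z i ^ 2) (Set.finite_range _).bddAbove s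

lemma Phi_le_sum {N M : ℕ} {v : Fin N → ℝ} (hv : ∀ i, 0 ≤ v i)
    (hne : Nonempty {s : Finset (Fin N) // s.card = M}) (z : Fin N → ℝ) :
    Phi N M v z ≤ ∑ i, v i * z i ^ 2 :=
  ciSup_le fun s => Finset.sum_le_sum_of_subset_of_nonneg (Finset.subset_univ _)
    fun i _ _ => mul_nonneg (hv i) (sq_nonneg _)

lemma Phi_nonneg {N M : ℕ} {v : Fin N → ℝ} (hv : ∀ i, 0 ≤ v i)
    (hne : Nonempty {s : Finset (Fin N) // s.card = M}) (z : Fin N → ℝ) :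
    0 ≤ Phi N M v z := by
  obtain ⟨s⟩ := hne
  exact le_trans (Finset.sum_nonneg fun i _ => mul_nonneg (hv i) (sq_nonneg _))
    (term_le_Phi v z s)

lemma integrable_Phi {N M : ℕ} {v : Fin N → ℝ} (hv : ∀ i, 0 ≤ v i)
    (hne : Nonempty {s : Finset (Fin N) // s.card = M}) :
    Integrable (Phi N M v) (Pim N) := by
  refine Integrable.mono' (g := fun z => ∑ i, v i * z i ^ 2)
    (integrable_finset_sum _ fun i _ => (my_int_sq N i).const_mul (v i))
    (measurable_Phi hne v).aestronglyMeasurable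
    (Filter.Eventually.of_forall fun z => ?_)
  rw [Real.norm_eq_abs, abs_of_nonneg (Phi_nonneg hv hne z)]
  exact Phi_le_sum hv hne z

lemma Phi_convex {N M : ℕ} {ι : Type*} [Fintype ι] (w : ι → ℝ) (hw : ∀ p, 0 ≤ w p)
    (v : ι → Fin N → ℝ) (z : Fin N → ℝ)
    (hne : Nonempty {s : Finset (Fin N) // s.card = M}) :
    Phi N M (fun i => ∑ p, w p * v p i) z ≤ ∑ p, w p * Phi N M (v p) z := by
  refine ciSup_le fun s => ?_
  have h1 : ∑ i ∈ s.1, (∑ p, w p * v p i) * z i ^ 2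
      = ∑ p, w p * ∑ i ∈ s.1, v p i * z i ^ 2 := by
    calc ∑ i ∈ s.1, (∑ p, w p * v p i) * z i ^ 2
        = ∑ i ∈ s.1, ∑ p, w p * (v p i * z i ^ 2) := by
          refine Finset.sum_congr rfl fun i _ => ?_
          rw [Finset.sum_mul]
          exact Finset.sum_congr rfl fun p _ => by ring
      _ = ∑ p, ∑ i ∈ s.1, w p * (v p i * z i ^ 2) := Finset.sum_comm
      _ = ∑ p, w p * ∑ i ∈ s.1, v p i * z i ^ 2 := by simp [Finset.mul_sum]
  rw [h1]
  exact Finset.sum_le_sum fun p _ =>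
    mul_le_mul_of_nonneg_left (term_le_Phi _ _ s) (hw p)

def smEquiv {N M : ℕ} (e : Equiv.Perm (Fin N)) :
    {s : Finset (Fin N) // s.card = M} ≃ {s : Finset (Fin N) // s.card = M} where
  toFun s := ⟨s.1.map e.toEmbedding, by rw [Finset.card_map, s.2]⟩
  invFun s := ⟨s.1.map e.symm.toEmbedding, by rw [Finset.card_map, s.2]⟩
  left_inv s := by
    apply Subtype.ext
    ext a
    simp [Finset.mem_map]
  right_inv s := by
    apply Subtype.ext
    ext a
    simp [Finset.mem_map]

lemma Phi_perm {N M : ℕ} (v : Fin N → ℝ) (e : Equiv.Perm (Fin N)) (z : Fin N → ℝ) :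
    Phi N M v (fun i => z (e.symm i)) = Phi N M (fun i => v (e i)) z := by
  have key : ∀ s : {s : Finset (Fin N) // s.card = M},
      (∑ i ∈ ((smEquiv (M := M) e.symm) s).1, v (e i) * z i ^ 2)
        = ∑ i ∈ s.1, v i * z (e.symm i) ^ 2 := by
    intro s
    rw [show ((smEquiv (M := M) e.symm) s).1 = s.1.map e.symm.toEmbedding from rfl,
      Finset.sum_map]
    refine Finset.sum_congr rfl fun i _ => ?_
    simp
  calc Phi N M v (fun i => z (e.symm i))
      = ⨆ s : {s : Finset (Fin N) // s.card = M},
          ∑ i ∈ ((smEquiv (M := M) e.symm) s).1, v (e i) * z i ^ 2 := by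
        rw [Phi]; exact (iSup_congr key).symm
    _ = Phi N M (fun i => v (e i)) z := by
        rw [Phi]
        exact my_iSup_equiv (smEquiv e.symm) (fun t => ∑ i ∈ t.1, v (e i) * z i ^ 2)

lemma G_perm {N M : ℕ} (hne : Nonempty {s : Finset (Fin N) // s.card = M})
    (v : Fin N → ℝ) (e : Equiv.Perm (Fin N)) :
    ∫ z, Phi N M (fun i => v (e i)) z ∂(Pim N) = ∫ z, Phi N M v z ∂(Pim N) := by
  have mp := my_mp_perm N e.symm
  conv_rhs => rw [← mp.map_eq]
  rw [integral_map mp.measurable.aemeasurable (measurable_Phi hne v).aestronglyMeasurable]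
  simp_rw [Phi_perm v e]

lemma expectation_eq {Ω : Type*} [MeasureSpace Ω] [IsProbabilityMeasure (ℙ : Measure Ω)]
    {N M : ℕ} (hne : Nonempty {s : Finset (Fin N) // s.card = M})
    (X : Fin N → Ω → ℝ) (hmeas : ∀ i, Measurable (X i))
    (hindep : iIndepFun X ℙ)
    (v : Fin N → ℝ≥0) (hgauss : ∀ i, Measure.map (X i) ℙ = gaussianReal 0 (v i)) :
    ∫ ω, (⨆ s : {s : Finset (Fin N) // s.card = M}, ∑ i ∈ s.1, (X i ω) ^ 2) ∂ℙ
      = ∫ z, Phi N M (fun i => (v i : ℝ)) z ∂(Pim N) := by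
  haveI := hne
  set F : (Fin N → ℝ) → ℝ :=
    fun x => ⨆ s : {s : Finset (Fin N) // s.card = M}, ∑ i ∈ s.1, x i ^ 2 with hFdef
  have hF : Measurable F :=
    my_measurable_iSup _ fun s => Finset.measurable_sum _
      fun i _ => (measurable_pi_apply i).pow_const 2
  have hjm : Measurable (fun ω i => X i ω) := measurable_pi_lambda _ hmeas
  have hjoint : Measure.map (fun ω i => X i ω) ℙ
      = Measure.pi (fun i => gaussianReal 0 (v i)) := by
    refine (Measure.pi_eq fun s hs => ?_).symm
    rw [Measure.map_apply hjm (MeasurableSet.univ_pi hs)]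
    have hpre : (fun ω i => X i ω) ⁻¹' Set.pi Set.univ s
        = ⋂ i ∈ Finset.univ, X i ⁻¹' s i := by
      ext ω; simp [Set.mem_pi]
    rw [hpre, hindep.measure_inter_preimage_eq_mul Finset.univ (fun i _ => hs i)]
    refine Finset.prod_congr rfl fun i _ => ?_
    rw [← Measure.map_apply (hmeas i) (hs i), hgauss i]
  have mp : MeasurePreserving (fun z : Fin N → ℝ => fun i => Real.sqrt (v i) * z i)
      (Pim N) (Measure.pi fun i => gaussianReal 0 (v i)) := by
    refine measurePreserving_pi _ _ fun i => ⟨measurable_id.const_mul _, ?_⟩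
    have h := gaussianReal_map_const_mul (μ := 0) (v := 1) (Real.sqrt (v i))
    rw [show ((Real.sqrt (v i) * ·) : ℝ → ℝ) = fun x => Real.sqrt (v i) * x from rfl] at h
    rw [h, mul_zero]
    congr 1
    rw [mul_one]
    ext
    exact Real.sq_sqrt (v i).coe_nonneg
  have h1 : ∫ ω, (⨆ s : {s : Finset (Fin N) // s.card = M}, ∑ i ∈ s.1, (X i ω) ^ 2) ∂ℙ
      = ∫ x, F x ∂(Measure.map (fun ω i => X i ω) ℙ) :=
    (integral_map hjm.aemeasurable hF.aestronglyMeasurable).symm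
  have h2 : ∫ x, F x ∂(Measure.pi fun i => gaussianReal 0 (v i))
      = ∫ z, F (fun i => Real.sqrt (v i) * z i) ∂(Pim N) := by
    rw [← mp.map_eq, integral_map mp.measurable.aemeasurable hF.aestronglyMeasurable]
  have h3 : ∀ z : Fin N → ℝ,
      F (fun i => Real.sqrt (v i) * z i) = Phi N M (fun i => (v i : ℝ)) z := by
    intro z
    refine iSup_congr fun s => Finset.sum_congr rfl fun i _ => ?_
    rw [mul_pow, Real.sq_sqrt (v i).coe_nonneg]
  rw [h1, hjoint, h2]
  simp_rw [h3]

/-- Let `T` be an `N × N` real orthogonal matrix,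
`σ_1 ≥ σ_2 ≥ … ≥ σ_N ≥ 0`, and `η_i = ∑ j, T_{ij}² σ_j`. Let `X̃` be
independent centered Gaussians with variances `η_i` and `Y` independent
centered Gaussians with variances `σ_i`. Then for every `1 ≤ M ≤ N`,
`E[φ_M(X̃)] ≤ E[φ_M(Y)]`, where `φ_M(x)` is the largest sum of squares of `M`
distinct coordinates of `x`. -/
theorem marshall_proschan_phiM {Ω : Type*} [MeasureSpace Ω]
    [IsProbabilityMeasure (ℙ : Measure Ω)]
    (N : ℕ) (T : Matrix (Fin N) (Fin N) ℝ) (hT : T.transpose * T = 1)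
    (σ : Fin N → ℝ≥0) (hσ : Antitone σ)
    (η : Fin N → ℝ≥0) (hη : ∀ i, (η i : ℝ) = ∑ j, T i j ^ 2 * (σ j : ℝ))
    (Xt : Fin N → Ω → ℝ) (hXtmeas : ∀ i, Measurable (Xt i))
    (hXtindep : iIndepFun Xt ℙ)
    (hXtgauss : ∀ i, Measure.map (Xt i) ℙ = gaussianReal 0 (η i))
    (Y : Fin N → Ω → ℝ) (hYmeas : ∀ i, Measurable (Y i))
    (hYindep : iIndepFun Y ℙ)
    (hYgauss : ∀ i, Measure.map (Y i) ℙ = gaussianReal 0 (σ i))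
    (M : ℕ) (hM1 : 1 ≤ M) (hMN : M ≤ N) :
    ∫ ω, (⨆ s : {s : Finset (Fin N) // s.card = M}, ∑ i ∈ s.1, (Xt i ω) ^ 2) ∂ℙ ≤
      ∫ ω, (⨆ s : {s : Finset (Fin N) // s.card = M}, ∑ i ∈ s.1, (Y i ω) ^ 2) ∂ℙ := by
  have hne : Nonempty {s : Finset (Fin N) // s.card = M} := SM_nonempty hMN
  rw [expectation_eq hne Xt hXtmeas hXtindep η hXtgauss,
    expectation_eq hne Y hYmeas hYindep σ hYgauss]
  -- the matrix of squared entries is doubly stochastic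
  set P : Matrix (Fin N) (Fin N) ℝ := fun i j => T i j ^ 2 with hPdef
  have hP : P ∈ doublyStochastic ℝ (Fin N) := by
    rw [mem_doublyStochastic_iff_sum]
    refine ⟨fun i j => sq_nonneg _, fun i => ?_, fun j => ?_⟩
    · have h2 : T * T.transpose = 1 := mul_eq_one_comm.mp hT
      have h3 := congrFun (congrFun h2 i) i
      simp only [Matrix.mul_apply, Matrix.transpose_apply, Matrix.one_apply_eq] at h3
      simpa [hPdef, pow_two] using h3
    · have h3 := congrFun (congrFun hT j) j
      simp only [Matrix.mul_apply, Matrix.transpose_apply, Matrix.one_apply_eq] at h3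
      simpa [hPdef, pow_two] using h3
  obtain ⟨w, hw0, hw1, hwP⟩ := exists_eq_sum_perm_of_mem_doublyStochastic hP
  -- decompose η as a convex combination of permutations of σ
  have hηc : (fun i => (η i : ℝ))
      = fun i => ∑ p : Equiv.Perm (Fin N), w p * (σ (p i) : ℝ) := by
    funext i
    rw [hη i]
    have hPij : ∀ j, P i j
        = ∑ p : Equiv.Perm (Fin N), w p * (if p i = j then 1 else 0) := by
      intro j
      have h4 := congrFun (congrFun hwP i) j
      simp only [Finset.sum_apply, Matrix.sum_apply, Matrix.smul_apply, smul_eq_mul] at h4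
      rw [← h4]
      refine Finset.sum_congr rfl fun p _ => ?_
      congr 1
      simp [Equiv.Perm.permMatrix, PEquiv.toMatrix_apply, Equiv.toPEquiv_apply]
    calc ∑ j, T i j ^ 2 * (σ j : ℝ)
        = ∑ j, ∑ p : Equiv.Perm (Fin N), w p * (if p i = j then 1 else 0) * (σ j : ℝ) := by
          refine Finset.sum_congr rfl fun j _ => ?_
          rw [show T i j ^ 2 = P i j from rfl, hPij j, Finset.sum_mul]
      _ = ∑ p : Equiv.Perm (Fin N), ∑ j, w p * (if p i = j then 1 else 0) * (σ j : ℝ) :=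
          Finset.sum_comm
      _ = ∑ p : Equiv.Perm (Fin N), w p * (σ (p i) : ℝ) := by
          refine Finset.sum_congr rfl fun p _ => ?_
          simp [mul_ite, ite_mul, Finset.sum_ite_eq, mul_comm]
  rw [hηc]
  have hint : ∀ p : Equiv.Perm (Fin N),
      Integrable (Phi N M (fun i => (σ (p i) : ℝ))) (Pim N) :=
    fun p => integrable_Phi (fun i => (σ (p i)).coe_nonneg) hne
  have hcombo : ∀ i, (0:ℝ) ≤ ∑ p : Equiv.Perm (Fin N), w p * (σ (p i) : ℝ) :=
    fun i => Finset.sum_nonneg fun p _ => mul_nonneg (hw0 p) (σ (p i)).coe_nonneg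
  calc ∫ z, Phi N M (fun i => ∑ p : Equiv.Perm (Fin N), w p * (σ (p i) : ℝ)) z ∂(Pim N)
      ≤ ∫ z, (∑ p : Equiv.Perm (Fin N), w p * Phi N M (fun i => (σ (p i) : ℝ)) z) ∂(Pim N) := by
        refine integral_mono (integrable_Phi hcombo hne)
          (integrable_finset_sum _ fun p _ => (hint p).const_mul _) fun z => ?_
        exact Phi_convex w hw0 _ z hne
    _ = ∑ p : Equiv.Perm (Fin N), w p * ∫ z, Phi N M (fun i => (σ (p i) : ℝ)) z ∂(Pim N) := by
        rw [integral_finset_sum _ fun p _ => (hint p).const_mul _]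
        exact Finset.sum_congr rfl fun p _ => integral_const_mul _ _
    _ = ∑ p : Equiv.Perm (Fin N), w p * ∫ z, Phi N M (fun i => (σ i : ℝ)) z ∂(Pim N) := by
        refine Finset.sum_congr rfl fun p _ => ?_
        rw [G_perm hne (fun i => (σ i : ℝ)) p]
    _ = ∫ z, Phi N M (fun i => (σ i : ℝ)) z ∂(Pim N) := by
        rw [← Finset.sum_mul, hw1, one_mul]
end
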